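/- arXiv:1401.0808 — 2 statements merged into one kernel-verified Lean document; each statement's English description precedes it below -/
import Mathlib

section
/- Let X ⊆ ℝᵈ be compact with C¹ boundary, x ∈ ∂X with outward unit normal n(x), and H_x = x + H_{n(x)} the supporting halfspace at x. Let ρ be a C¹ radial probability density with compact support and f : [0,1] → ℝ be C¹ on an interval [β,ω] ⊆ (0,1) containing the relevant values. Then there exists M > 0 such that for all y in the tubular neighborhood with both θ_a^X(y) ∈ [β,ω] and θ_a^{H_{ξ(y)}}(y) ∈ [β,ω], |f(θ_a^X(y)) − f(θ_a^{H_{ξ(y)}}(y))| ≤ M a, where ξ(y) is the nearest-point projection of y onto ∂X and θ_a^Y = 𝟙_Y ⋆ ρ_a. -/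
open MeasureTheory

noncomputable def intensity {d : ℕ} (X : Set (EuclideanSpace ℝ (Fin d)))
    (ρ : EuclideanSpace ℝ (Fin d) → ℝ) (z : EuclideanSpace ℝ (Fin d)) : ℝ :=
  ∫ y : EuclideanSpace ℝ (Fin d), X.indicator (fun _ => (1 : ℝ)) y * ρ (z - y)

noncomputable def scaleKernel {d : ℕ} (a : ℝ) (ρ : EuclideanSpace ℝ (Fin d) → ℝ) :
    EuclideanSpace ℝ (Fin d) → ℝ :=
  fun x => (a ^ d)⁻¹ * ρ (a⁻¹ • x)

/-- The supporting halfspace `H_p = p + H_{n(p)}` at a boundary point `p` with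
outward unit normal `n p`. -/
def suppHalfspace {d : ℕ} (n : EuclideanSpace ℝ (Fin d) → EuclideanSpace ℝ (Fin d))
    (p : EuclideanSpace ℝ (Fin d)) : Set (EuclideanSpace ℝ (Fin d)) :=
  {y | inner ℝ (y - p) (n p) ≤ (0 : ℝ)}

section Aux

variable {d : ℕ} {a D S B V R : ℝ} {ρ k : EuclideanSpace ℝ (Fin d) → ℝ}
  {X H Y : Set (EuclideanSpace ℝ (Fin d))} {y w p : EuclideanSpace ℝ (Fin d)}

lemma sk_cont (hρ : Continuous ρ) : Continuous (scaleKernel a ρ) :=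
  continuous_const.mul (hρ.comp (continuous_const_smul _))

lemma sk_supp (ha : 0 < a) (hD : tsupport ρ ⊆ Metric.closedBall 0 D)
    (h : scaleKernel a ρ (y - w) ≠ 0) : dist w y ≤ a * D := by
  have h1 : ρ (a⁻¹ • (y - w)) ≠ 0 := by
    intro h0; apply h; simp [scaleKernel, h0]
  have h2 : a⁻¹ • (y - w) ∈ Metric.closedBall (0 : EuclideanSpace ℝ (Fin d)) D :=
    hD (subset_closure (by simpa [Function.mem_support] using h1))
  rw [Metric.mem_closedBall, dist_zero_right, norm_smul, norm_inv, Real.norm_eq_abs,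
    abs_of_pos ha] at h2
  rw [dist_comm, dist_eq_norm]
  calc ‖y - w‖ = a * (a⁻¹ * ‖y - w‖) := by field_simp
  _ ≤ a * D := by nlinarith [norm_nonneg (y - w)]

lemma sk_bound (ha : 0 < a) (hS : ∀ x, ‖ρ x‖ ≤ S) (z : EuclideanSpace ℝ (Fin d)) :
    |scaleKernel a ρ z| ≤ (a ^ d)⁻¹ * S := by
  have had : (0:ℝ) < (a ^ d)⁻¹ := by positivity
  have := hS (a⁻¹ • z)
  rw [Real.norm_eq_abs] at this
  calc |scaleKernel a ρ z| = (a ^ d)⁻¹ * |ρ (a⁻¹ • z)| := by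
        rw [scaleKernel, abs_mul, abs_of_pos had]
  _ ≤ (a ^ d)⁻¹ * S := by nlinarith

lemma sk_int (ha : 0 < a) (hρ1 : ∫ x, ρ x = 1) :
    ∫ w : EuclideanSpace ℝ (Fin d), scaleKernel a ρ (y - w) = 1 := by
  rw [integral_sub_left_eq_self (scaleKernel a ρ) volume y]
  have : ∫ w : EuclideanSpace ℝ (Fin d), scaleKernel a ρ w
      = (a ^ d)⁻¹ * ∫ w : EuclideanSpace ℝ (Fin d), ρ (a⁻¹ • w) := by
    simp [scaleKernel, integral_const_mul]
  rw [this, MeasureTheory.Measure.integral_comp_smul volume ρ a⁻¹,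
    finrank_euclideanSpace_fin, hρ1]
  have hane : a ≠ 0 := ne_of_gt ha
  rw [smul_eq_mul, mul_one, inv_pow, inv_inv, abs_of_pos (by positivity)]
  field_simp

lemma k_integrable (hk : Continuous k)
    (hsupp : ∀ w, k (y - w) ≠ 0 → dist w y ≤ a * D) :
    Integrable (fun w => k (y - w)) := by
  apply Continuous.integrable_of_hasCompactSupport
  · exact hk.comp (continuous_const.sub continuous_id)
  · apply HasCompactSupport.intro (K := Metric.closedBall y (a * D))
      (isCompact_closedBall _ _)
    intro w hw
    by_contra h
    exact hw (Metric.mem_closedBall.2 (hsupp w h))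

lemma ind_k_integrable (hk : Continuous k)
    (hsupp : ∀ w, k (y - w) ≠ 0 → dist w y ≤ a * D) (hY : MeasurableSet Y) :
    Integrable (fun w => Y.indicator (fun _ => (1:ℝ)) w * k (y - w)) := by
  refine (k_integrable hk hsupp).bdd_mul (c := 1) ?_ (Filter.Eventually.of_forall fun w => ?_)
  · exact (aestronglyMeasurable_indicator_iff hY).2 aestronglyMeasurable_const
  · rw [Real.norm_eq_abs]
    rcases Set.indicator_eq_zero_or_self Y (fun _ => (1:ℝ)) w with h | h <;> simp [h]

lemma intensity_one
    (hsupp : ∀ w, k (y - w) ≠ 0 → dist w y ≤ a * D)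
    (hk1 : ∫ w : EuclideanSpace ℝ (Fin d), k (y - w) = 1)
    (hsub : Metric.closedBall y (a * D) ⊆ Y) : intensity Y k y = 1 := by
  have heq : (fun w => Y.indicator (fun _ => (1:ℝ)) w * k (y - w))
      = fun w => k (y - w) := by
    funext w
    by_cases h : k (y - w) = 0
    · simp [h]
    · rw [Set.indicator_of_mem (hsub (Metric.mem_closedBall.2 (hsupp w h))), one_mul]
  rw [intensity, heq, hk1]

lemma intensity_zero (hsupp : ∀ w, k (y - w) ≠ 0 → dist w y ≤ a * D)
    (hdisj : ∀ w ∈ Metric.closedBall y (a * D), w ∉ Y) : intensity Y k y = 0 := by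
  rw [intensity]
  apply integral_eq_zero_of_ae
  filter_upwards with w
  by_cases h : k (y - w) = 0
  · simp [h]
  · rw [Set.indicator_of_notMem (hdisj w (Metric.mem_closedBall.2 (hsupp w h))), zero_mul]
    simp

lemma intensity_loc
    (hsupp : ∀ w, k (y - w) ≠ 0 → dist w y ≤ a * D)
    (hk1 : ∫ w : EuclideanSpace ℝ (Fin d), k (y - w) = 1)
    (h0 : 0 < intensity X k y) (h1 : intensity X k y < 1) :
    ∃ p ∈ frontier X, dist y p ≤ a * D := by
  by_contra hcon
  push_neg at hcon
  have hdisj : ∀ z ∈ Metric.closedBall y (a * D), z ∉ frontier X := by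
    intro z hz hzf
    exact absurd (Metric.mem_closedBall'.1 hz) (not_le.2 (hcon z hzf))
  have hsub : Metric.closedBall y (a * D) ⊆ interior X ∪ (closure X)ᶜ := by
    intro z hz
    by_cases hzi : z ∈ interior X
    · exact Or.inl hzi
    · exact Or.inr fun hzc => hdisj z hz ⟨hzc, hzi⟩
  rcases (convex_closedBall y (a * D)).isPreconnected.subset_or_subset
      isOpen_interior (isClosed_closure.isOpen_compl)
      (by
        rw [Set.disjoint_left]
        intro z hz1 hz2
        exact hz2 (subset_closure (interior_subset hz1)))
      hsub with hin | hout
  · have := intensity_one hsupp hk1 (hin.trans interior_subset)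
    linarith
  · have := intensity_zero hsupp (fun w hw hwX => (hout hw) (subset_closure hwX))
    linarith

lemma intensity_diff_le
    (hIX : Integrable (fun w => X.indicator (fun _ => (1:ℝ)) w * k (y - w)))
    (hIH : Integrable (fun w => H.indicator (fun _ => (1:ℝ)) w * k (y - w)))
    (hXm : MeasurableSet X) (hHm : MeasurableSet H)
    (hB : 0 ≤ B) (hV : 0 ≤ V)
    (hbd : ∀ z, |k z| ≤ B)
    (hsupp : ∀ w, k (y - w) ≠ 0 → dist w y ≤ a * D)
    (hball : Metric.closedBall y (a * D) ⊆ Metric.closedBall p R)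
    (hvol : volume ((symmDiff X H) ∩ Metric.closedBall p R) ≤ ENNReal.ofReal V) :
    |intensity X k y - intensity H k y| ≤ B * V := by
  set s := (symmDiff X H) ∩ Metric.closedBall p R with hs
  have hsm : MeasurableSet s :=
    ((hXm.symmDiff hHm).inter measurableSet_closedBall)
  have hslt : volume s < ⊤ := lt_of_le_of_lt hvol ENNReal.ofReal_lt_top
  have hIbound : Integrable (s.indicator (fun _ => B)) volume :=
    (integrable_indicator_iff hsm).2 (integrableOn_const hslt.ne)
  have hdiff : intensity X k y - intensity H k y
      = ∫ w, (X.indicator (fun _ => (1:ℝ)) w - H.indicator (fun _ => (1:ℝ)) w) * k (y - w) := by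
    rw [intensity, intensity, ← integral_sub hIX hIH]
    congr 1; funext w; ring
  rw [hdiff]
  have hptwise : ∀ w, |(X.indicator (fun _ => (1:ℝ)) w - H.indicator (fun _ => (1:ℝ)) w)
      * k (y - w)| ≤ s.indicator (fun _ => B) w := by
    intro w
    by_cases hws : w ∈ s
    · rw [Set.indicator_of_mem hws, abs_mul]
      have h1 : |X.indicator (fun _ => (1:ℝ)) w - H.indicator (fun _ => (1:ℝ)) w| ≤ 1 := by
        rcases Set.indicator_eq_zero_or_self X (fun _ => (1:ℝ)) w with h | h <;>
        rcases Set.indicator_eq_zero_or_self H (fun _ => (1:ℝ)) w with h' | h' <;>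
          rw [h, h'] <;> simp
      have h2 := hbd (y - w)
      nlinarith [abs_nonneg (k (y - w))]
    · rw [Set.indicator_of_notMem hws]
      by_cases hsd : w ∈ symmDiff X H
      · have hwb : w ∉ Metric.closedBall p R := fun hwb => hws ⟨hsd, hwb⟩
        have : k (y - w) = 0 := by
          by_contra h
          exact hwb (hball (Metric.mem_closedBall.2 (hsupp w h)))
        simp [this]
      · have : w ∈ X ↔ w ∈ H := by
          rw [Set.mem_symmDiff] at hsd
          tauto
        have hind : X.indicator (fun _ => (1:ℝ)) w = H.indicator (fun _ => (1:ℝ)) w := by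
          by_cases hw : w ∈ X
          · rw [Set.indicator_of_mem hw, Set.indicator_of_mem (this.1 hw)]
          · rw [Set.indicator_of_notMem hw, Set.indicator_of_notMem (fun h => hw (this.2 h))]
        simp [hind]
  calc |∫ w, (X.indicator (fun _ => (1:ℝ)) w - H.indicator (fun _ => (1:ℝ)) w) * k (y - w)|
      ≤ ∫ w, |(X.indicator (fun _ => (1:ℝ)) w - H.indicator (fun _ => (1:ℝ)) w) * k (y - w)| := by
        simpa [Real.norm_eq_abs, abs_mul] using
          norm_integral_le_integral_norm (μ := volume)
            (f := fun w => (X.indicator (fun _ => (1:ℝ)) w - H.indicator (fun _ => (1:ℝ)) w) * k (y - w))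
    _ ≤ ∫ w, s.indicator (fun _ => B) w := by
        have hIabs : Integrable (fun w => |(X.indicator (fun _ => (1:ℝ)) w
            - H.indicator (fun _ => (1:ℝ)) w) * k (y - w)|) := by
          have := (hIX.sub hIH).abs
          simpa [Pi.sub_apply, sub_mul] using this
        exact integral_mono hIabs hIbound hptwise
    _ = (volume s).toReal * B := by rw [integral_indicator_const B hsm, smul_eq_mul, measureReal_def]
    _ ≤ V * B := by
        have := ENNReal.toReal_le_of_le_ofReal hV hvol
        nlinarith
    _ = B * V := by ring

end Aux

theorem stmt5 (d : ℕ) (X : Set (EuclideanSpace ℝ (Fin d))) (hX : IsCompact X)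
    -- outward unit normal field on the C¹ boundary
    (n : EuclideanSpace ℝ (Fin d) → EuclideanSpace ℝ (Fin d))
    (hn : ∀ p ∈ frontier X, ‖n p‖ = 1)
    -- quadratic approximation property of the C¹ boundary by supporting halfspaces
    (r Cgeom : ℝ) (hr : 0 < r) (hC : 0 < Cgeom)
    (hgeom : ∀ p ∈ frontier X, ∀ R ∈ Set.Ioo (0 : ℝ) r,
      volume ((symmDiff X (suppHalfspace n p)) ∩ Metric.closedBall p R)
        ≤ ENNReal.ofReal (Cgeom * R ^ (d + 1)))
    -- nearest-point projection onto the boundary, defined on the tubular neighborhood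
    (ξ : EuclideanSpace ℝ (Fin d) → EuclideanSpace ℝ (Fin d))
    (hξ : ∀ y ∈ Metric.thickening r (frontier X),
      ξ y ∈ frontier X ∧ dist y (ξ y) = Metric.infDist y (frontier X))
    -- the kernel: a C¹ radial compactly supported probability density
    (ρ : EuclideanSpace ℝ (Fin d) → ℝ) (hρ0 : ∀ x, 0 ≤ ρ x) (hρC1 : ContDiff ℝ 1 ρ)
    (hρsupp : HasCompactSupport ρ)
    (hρrad : ∀ x y : EuclideanSpace ℝ (Fin d), ‖x‖ = ‖y‖ → ρ x = ρ y)
    (hρ1 : ∫ x, ρ x = 1)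
    -- the weight function, C¹ on [β,ω] ⊆ (0,1)
    (β ω : ℝ) (hβ : 0 < β) (hβω : β ≤ ω) (hω : ω < 1)
    (f : ℝ → ℝ) (hf : ContDiffOn ℝ 1 f (Set.Icc β ω)) :
    ∃ M > 0, ∃ a₀ > 0, ∀ a : ℝ, 0 < a → a < a₀ →
      ∀ y ∈ Metric.thickening r (frontier X),
        intensity X (scaleKernel a ρ) y ∈ Set.Icc β ω →
        intensity (suppHalfspace n (ξ y)) (scaleKernel a ρ) y ∈ Set.Icc β ω →
        |f (intensity X (scaleKernel a ρ) y)
            - f (intensity (suppHalfspace n (ξ y)) (scaleKernel a ρ) y)| ≤ M * a := by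
  -- the support radius of ρ
  obtain ⟨D₀, hD₀⟩ := hρsupp.isBounded.subset_closedBall (0 : EuclideanSpace ℝ (Fin d))
  set D : ℝ := max D₀ 1 with hD
  have hD1 : (1:ℝ) ≤ D := le_max_right _ _
  have hDpos : (0:ℝ) < D := lt_of_lt_of_le one_pos hD1
  have hDsub : tsupport ρ ⊆ Metric.closedBall 0 D :=
    hD₀.trans (Metric.closedBall_subset_closedBall (le_max_left _ _))
  -- the sup bound of ρ
  obtain ⟨S₀, hS₀⟩ := hρsupp.exists_bound_of_continuous hρC1.continuous
  set S : ℝ := max S₀ 1 with hSdef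
  have hSpos : (0:ℝ) < S := lt_of_lt_of_le one_pos (le_max_right _ _)
  have hS : ∀ x, ‖ρ x‖ ≤ S := fun x => (hS₀ x).trans (le_max_left _ _)
  -- a Lipschitz constant for f on [β, ω]
  obtain ⟨L, hL0, hL⟩ : ∃ L : ℝ, 0 ≤ L ∧
      ∀ u ∈ Set.Icc β ω, ∀ v ∈ Set.Icc β ω, |f u - f v| ≤ L * |u - v| := by
    rcases eq_or_lt_of_le hβω with heq | hlt
    · refine ⟨0, le_refl _, ?_⟩
      subst heq
      intro u hu v hv
      rw [Set.Icc_self, Set.mem_singleton_iff] at hu hv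
      simp [hu, hv]
    · have hud := uniqueDiffOn_Icc hlt
      have hcont : ContinuousOn (derivWithin f (Set.Icc β ω)) (Set.Icc β ω) :=
        hf.continuousOn_derivWithin hud le_rfl
      obtain ⟨C, hCb⟩ := isCompact_Icc.exists_bound_of_continuousOn hcont
      refine ⟨max C 0, le_max_right _ _, ?_⟩
      have hlip : LipschitzOnWith (max C 0).toNNReal f (Set.Icc β ω) := by
        apply (convex_Icc β ω).lipschitzOnWith_of_nnnorm_derivWithin_le
          (hf.differentiableOn one_ne_zero)
        intro x hx
        rw [← NNReal.coe_le_coe, coe_nnnorm, Real.coe_toNNReal _ (le_max_right C 0)]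
        exact le_trans (hCb x hx) (le_max_left _ _)
      intro u hu v hv
      have h := hlip.dist_le_mul u hu v hv
      rw [Real.dist_eq, Real.dist_eq, Real.coe_toNNReal _ (le_max_right C 0)] at h
      exact h
  -- constants
  set Cbig : ℝ := S * Cgeom * (2 * D) ^ (d + 1) with hCbig
  have hCbigpos : 0 < Cbig := by positivity
  refine ⟨max (L * Cbig) 1, lt_of_lt_of_le one_pos (le_max_right _ _),
    r / (2 * D), by positivity, ?_⟩
  intro a ha ha₀ y hy hIX hIH
  set k := scaleKernel a ρ with hk
  set H := suppHalfspace n (ξ y) with hH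
  have hkcont : Continuous k := sk_cont hρC1.continuous
  have hsupp : ∀ w, k (y - w) ≠ 0 → dist w y ≤ a * D := fun w h => sk_supp ha hDsub h
  have hk1 : ∫ w : EuclideanSpace ℝ (Fin d), k (y - w) = 1 := sk_int ha hρ1
  have hbd : ∀ z, |k z| ≤ (a ^ d)⁻¹ * S := sk_bound ha hS
  have hXm : MeasurableSet X := hX.isClosed.measurableSet
  have hHm : MeasurableSet H := by
    have hcont : Continuous fun t : EuclideanSpace ℝ (Fin d) =>
        (inner ℝ (t - ξ y) (n (ξ y)) : ℝ) :=
      (continuous_id.sub continuous_const).inner continuous_const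
    exact (isClosed_le hcont continuous_const).measurableSet
  have hIXint := ind_k_integrable hkcont hsupp hXm
  have hIHint := ind_k_integrable hkcont hsupp hHm
  -- localization: y is within a*D of the boundary
  obtain ⟨q, hq, hdq⟩ := intensity_loc hsupp hk1
    (lt_of_lt_of_le hβ hIX.1) (lt_of_le_of_lt hIX.2 hω)
  have hdyξ : dist y (ξ y) ≤ a * D := by
    rw [(hξ y hy).2]
    exact (Metric.infDist_le_dist_of_mem hq).trans hdq
  have hball : Metric.closedBall y (a * D) ⊆ Metric.closedBall (ξ y) (2 * (a * D)) := by
    intro z hz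
    rw [Metric.mem_closedBall] at hz ⊢
    calc dist z (ξ y) ≤ dist z y + dist y (ξ y) := dist_triangle _ _ _
      _ ≤ a * D + a * D := add_le_add hz hdyξ
      _ = 2 * (a * D) := by ring
  have hRlt : 2 * (a * D) < r := by
    have := (lt_div_iff₀ (by positivity : (0:ℝ) < 2 * D)).1 ha₀
    nlinarith
  have hvol := hgeom (ξ y) (hξ y hy).1 (2 * (a * D)) ⟨by positivity, hRlt⟩
  have hest : |intensity X k y - intensity H k y|
      ≤ (a ^ d)⁻¹ * S * (Cgeom * (2 * (a * D)) ^ (d + 1)) := by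
    apply intensity_diff_le hIXint hIHint hXm hHm (by positivity) (by positivity)
      hbd hsupp hball
    exact hvol
  have halg : (a ^ d)⁻¹ * S * (Cgeom * (2 * (a * D)) ^ (d + 1)) = Cbig * a := by
    have hane : a ≠ 0 := ne_of_gt ha
    rw [hCbig]
    have : (2 * (a * D)) ^ (d + 1) = (2 * D) ^ (d + 1) * a ^ (d + 1) := by
      rw [← mul_pow]; ring_nf
    rw [this, pow_succ]
    field_simp
    ring
  rw [halg] at hest
  calc |f (intensity X k y) - f (intensity H k y)|
      ≤ L * |intensity X k y - intensity H k y| := hL _ hIX _ hIH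
    _ ≤ L * (Cbig * a) := by nlinarith [abs_nonneg (intensity X k y - intensity H k y)]
    _ = (L * Cbig) * a := by ring
    _ ≤ max (L * Cbig) 1 * a := by nlinarith [le_max_left (L * Cbig) 1]
end

section
/- (Phase non-stationarity on a cap) Let X_j ⊆ ℝᵈ be a set and ξ_j ∈ S^{d-1} such that for all distinct x, y ∈ X_j, the angle between x−y and ξ_j is at least 7π/16. Let n : X_j → S^{d-1} be Lipschitz with constant C. Then there exist δ, δ', a₀ > 0 such that for all 0 < a < a₀, all |t| ≤ a, all distinct x, y ∈ X_j, and all u ∈ S^{d-1} with |⟨ξ_j, u⟩| ≥ cos(3π/8): (i) |x − y + t(n(x) − n(y))| ≥ (1−δ)|x−y|, and (ii) |⟨w, u⟩| ≤ 1 − δ' where w = (x − y + t(n(x)−n(y)))/|x − y + t(n(x)−n(y))|. -/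
open InnerProductGeometry Real

private lemma arccos_antitone : Antitone Real.arccos := fun _ _ h =>
  sub_le_sub_left (Real.monotone_arcsin h) _

/-- Gram-type inequality for three unit vectors. -/
private lemma three_vec {E : Type*} [NormedAddCommGroup E] [InnerProductSpace ℝ E]
    (p ξ u : E) (hp : ‖p‖ = 1) (hξ : ‖ξ‖ = 1) (hu : ‖u‖ = 1) :
    |(inner ℝ p u : ℝ)| ≤ |(inner ℝ p ξ : ℝ)| * |(inner ℝ ξ u : ℝ)| +
      Real.sqrt (1 - (inner ℝ p ξ : ℝ)^2) * Real.sqrt (1 - (inner ℝ ξ u : ℝ)^2) := by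
  set a : ℝ := inner ℝ p ξ with ha
  set c : ℝ := inner ℝ ξ u with hc
  set b : ℝ := inner ℝ p u with hb
  have hξp : (inner ℝ ξ p : ℝ) = a := by rw [ha]; exact (real_inner_comm ξ p).symm
  have huξ : (inner ℝ u ξ : ℝ) = c := by rw [hc]; exact (real_inner_comm u ξ).symm
  have hps : (inner ℝ p p : ℝ) = 1 := by
    rw [real_inner_self_eq_norm_sq, hp]; norm_num
  have hξs : (inner ℝ ξ ξ : ℝ) = 1 := by
    rw [real_inner_self_eq_norm_sq, hξ]; norm_num
  have hus : (inner ℝ u u : ℝ) = 1 := by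
    rw [real_inner_self_eq_norm_sq, hu]; norm_num
  have h1 : (inner ℝ (p - a • ξ) (u - c • ξ) : ℝ) = b - a * c := by
    simp only [inner_sub_left, inner_sub_right, inner_smul_left, inner_smul_right,
      RCLike.ofReal_real_eq_id, id, conj_trivial]
    rw [hξs]
    ring
  have hn1 : ‖p - a • ξ‖ = Real.sqrt (1 - a ^ 2) := by
    have : ‖p - a • ξ‖ ^ 2 = 1 - a ^ 2 := by
      rw [← real_inner_self_eq_norm_sq]
      simp only [inner_sub_left, inner_sub_right, inner_smul_left, inner_smul_right,
        RCLike.ofReal_real_eq_id, id, conj_trivial]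
      rw [hps, hξs, hξp]
      ring
    rw [← this, Real.sqrt_sq (norm_nonneg _)]
  have hn2 : ‖u - c • ξ‖ = Real.sqrt (1 - c ^ 2) := by
    have : ‖u - c • ξ‖ ^ 2 = 1 - c ^ 2 := by
      rw [← real_inner_self_eq_norm_sq]
      simp only [inner_sub_left, inner_sub_right, inner_smul_left, inner_smul_right,
        RCLike.ofReal_real_eq_id, id, conj_trivial]
      rw [hus, hξs, huξ]
      ring
    rw [← this, Real.sqrt_sq (norm_nonneg _)]
  have hcs : |b - a * c| ≤ Real.sqrt (1 - a ^ 2) * Real.sqrt (1 - c ^ 2) := by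
    calc |b - a * c| = |(inner ℝ (p - a • ξ) (u - c • ξ) : ℝ)| := by rw [h1]
      _ ≤ ‖p - a • ξ‖ * ‖u - c • ξ‖ := abs_real_inner_le_norm _ _
      _ = Real.sqrt (1 - a ^ 2) * Real.sqrt (1 - c ^ 2) := by rw [hn1, hn2]
  calc |b| = |a * c + (b - a * c)| := by ring_nf
    _ ≤ |a * c| + |b - a * c| := abs_add_le _ _
    _ ≤ |a| * |c| + Real.sqrt (1 - a ^ 2) * Real.sqrt (1 - c ^ 2) := by
        rw [abs_mul]; linarith

/-- Numeric angle estimate. -/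
private lemma numeric_bound {α γ : ℝ} (hα0 : 0 ≤ α) (hα : α ≤ Real.cos (7 * π / 16))
    (hγ : Real.cos (3 * π / 8) ≤ γ) (hγ1 : γ ≤ 1) :
    α * γ + Real.sqrt (1 - α ^ 2) * Real.sqrt (1 - γ ^ 2) ≤ Real.cos (π / 16) := by
  have hpi := Real.pi_pos
  have hs0 : Real.cos (7 * π / 16) ≤ 1 := Real.cos_le_one _
  have hα1 : α ≤ 1 := hα.trans hs0
  have hγ0 : 0 ≤ γ := le_trans (Real.cos_nonneg_of_mem_Icc ⟨by linarith, by linarith⟩) hγ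
  set A := Real.arccos α with hA
  set B := Real.arccos γ with hB
  have hcA : Real.cos A = α := Real.cos_arccos (by linarith) hα1
  have hcB : Real.cos B = γ := Real.cos_arccos (by linarith) hγ1
  have hsA : Real.sin A = Real.sqrt (1 - α ^ 2) := Real.sin_arccos α
  have hsB : Real.sin B = Real.sqrt (1 - γ ^ 2) := Real.sin_arccos γ
  have hAge : 7 * π / 16 ≤ A := by
    have := arccos_antitone hα
    rwa [Real.arccos_cos (by linarith) (by linarith)] at this
  have hBle : B ≤ 3 * π / 8 := by
    have := arccos_antitone hγ
    rwa [Real.arccos_cos (by linarith) (by linarith)] at this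
  have hAle : A ≤ π / 2 := Real.arccos_le_pi_div_two.mpr hα0
  have hBge : 0 ≤ B := Real.arccos_nonneg γ
  have heq : α * γ + Real.sqrt (1 - α ^ 2) * Real.sqrt (1 - γ ^ 2) = Real.cos (A - B) := by
    rw [Real.cos_sub, hcA, hcB, hsA, hsB]
  rw [heq]
  exact Real.cos_le_cos_of_nonneg_of_le_pi (by positivity) (by linarith) (by linarith)

theorem stmt13 (d : ℕ) (Xj : Set (EuclideanSpace ℝ (Fin d)))
    (ξj : EuclideanSpace ℝ (Fin d)) (hξj : ‖ξj‖ = 1)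
    (hangle : ∀ x ∈ Xj, ∀ y ∈ Xj, x ≠ y →
      7 * π / 16 ≤ InnerProductGeometry.angle (x - y) ξj)
    (n : EuclideanSpace ℝ (Fin d) → EuclideanSpace ℝ (Fin d))
    (hnunit : ∀ x ∈ Xj, ‖n x‖ = 1)
    (C : ℝ) (hC : 0 < C)
    (hnlip : ∀ x ∈ Xj, ∀ y ∈ Xj, ‖n x - n y‖ ≤ C * ‖x - y‖) :
    ∃ δ > (0:ℝ), ∃ δ' > (0:ℝ), ∃ a₀ > (0:ℝ), ∀ a : ℝ, 0 < a → a < a₀ →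
      ∀ t : ℝ, |t| ≤ a → ∀ x ∈ Xj, ∀ y ∈ Xj, x ≠ y →
      ∀ u : EuclideanSpace ℝ (Fin d), ‖u‖ = 1 →
        Real.cos (3 * π / 8) ≤ |(inner ℝ ξj u : ℝ)| →
        (1 - δ) * ‖x - y‖ ≤ ‖x - y + t • (n x - n y)‖ ∧
        |(inner ℝ (‖x - y + t • (n x - n y)‖⁻¹ • (x - y + t • (n x - n y))) u : ℝ)|
          ≤ 1 - δ' := by
  have hpi := Real.pi_pos
  set K : ℝ := Real.cos (π / 16) with hK
  have hK1 : K < 1 := by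
    rw [hK]
    have h := Real.cos_lt_cos_of_nonneg_of_le_pi (x := 0) (y := π / 16) le_rfl
      (by linarith) (by linarith)
    rwa [Real.cos_zero] at h
  have hK0 : 0 < K := Real.cos_pos_of_mem_Ioo ⟨by linarith, by linarith⟩
  set δ : ℝ := (1 - K) / 4 with hδ
  have hδ0 : 0 < δ := by rw [hδ]; linarith
  have hδ4 : δ < 1 / 4 := by rw [hδ]; linarith
  set δ' : ℝ := 1 - (K + δ) / (1 - δ) with hδ'
  have hδ'0 : 0 < δ' := by
    rw [hδ']
    have h1 : K + δ < 1 - δ := by rw [hδ]; linarith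
    have h2 : (0:ℝ) < 1 - δ := by linarith
    have := (div_lt_one h2).mpr h1
    linarith
  refine ⟨δ, hδ0, δ', hδ'0, δ / C, by positivity, ?_⟩
  intro a ha0 haa t ht x hx y hy hxy u hu hcosu
  set v := x - y with hv
  set e := t • (n x - n y) with he
  have hv0 : v ≠ 0 := sub_ne_zero.mpr hxy
  have hvn : 0 < ‖v‖ := norm_pos_iff.mpr hv0
  have hen : ‖e‖ ≤ δ * ‖v‖ := by
    rw [he, norm_smul]
    have h1 : ‖n x - n y‖ ≤ C * ‖v‖ := hnlip x hx y hy
    have h2 : |t| * ‖n x - n y‖ ≤ a * (C * ‖v‖) := by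
      apply mul_le_mul ht h1 (norm_nonneg _) (by linarith [abs_nonneg t])
    have h3 : a * (C * ‖v‖) ≤ δ * ‖v‖ := by
      have : a * C ≤ δ := by
        rw [← div_le_div_iff_of_pos_right hC] at *
        calc a * C / C = a := by field_simp
          _ ≤ δ / C := le_of_lt haa
      calc a * (C * ‖v‖) = (a * C) * ‖v‖ := by ring
        _ ≤ δ * ‖v‖ := mul_le_mul_of_nonneg_right this hvn.le
    simpa using h2.trans h3
  -- part (i)
  have hi : (1 - δ) * ‖v‖ ≤ ‖v + e‖ := by
    have h1 : ‖v‖ ≤ ‖v + e‖ + ‖e‖ := by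
      calc ‖v‖ = ‖(v + e) - e‖ := by congr 1; abel
        _ ≤ ‖v + e‖ + ‖e‖ := norm_sub_le _ _
    linarith
  have hm0 : 0 < ‖v + e‖ := lt_of_lt_of_le (by nlinarith) hi
  refine ⟨hi, ?_⟩
  -- inner ℝ v u bound
  have hvxi : |(inner ℝ v ξj : ℝ)| ≤ Real.cos (7 * π / 16) * ‖v‖ := by
    have hang1 : 7 * π / 16 ≤ angle v ξj := hangle x hx y hy hxy
    have hang2 : angle v ξj ≤ 9 * π / 16 := by
      have h := hangle y hy x hx hxy.symm
      have hne : y - x = -(x - y) := by abel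
      rw [hne, angle_neg_left] at h
      linarith
    have hca : Real.cos (angle v ξj) = (inner ℝ v ξj : ℝ) / (‖v‖ * ‖ξj‖) :=
      InnerProductGeometry.cos_angle v ξj
    have hub : Real.cos (angle v ξj) ≤ Real.cos (7 * π / 16) :=
      Real.cos_le_cos_of_nonneg_of_le_pi (by linarith) (angle_le_pi v ξj) hang1
    have hlb : Real.cos (9 * π / 16) ≤ Real.cos (angle v ξj) :=
      Real.cos_le_cos_of_nonneg_of_le_pi (angle_nonneg v ξj) (by linarith) hang2
    have h9 : Real.cos (9 * π / 16) = -Real.cos (7 * π / 16) := by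
      have : (9:ℝ) * π / 16 = π - 7 * π / 16 := by ring
      rw [this, Real.cos_pi_sub]
    rw [h9] at hlb
    have habs : |Real.cos (angle v ξj)| ≤ Real.cos (7 * π / 16) := abs_le.mpr ⟨hlb, hub⟩
    rw [hca, hξj, mul_one, abs_div, abs_of_pos hvn] at habs
    calc |(inner ℝ v ξj : ℝ)| = |(inner ℝ v ξj : ℝ)| / ‖v‖ * ‖v‖ := by field_simp
      _ ≤ Real.cos (7 * π / 16) * ‖v‖ := mul_le_mul_of_nonneg_right habs hvn.le
  have hvu : |(inner ℝ v u : ℝ)| ≤ K * ‖v‖ := by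
    set p := ‖v‖⁻¹ • v with hp
    have hpn : ‖p‖ = 1 := by
      rw [hp, norm_smul, norm_inv, norm_norm, inv_mul_cancel₀ hvn.ne']
    have hpu := three_vec p ξj u hpn hξj hu
    have hpxi : |(inner ℝ p ξj : ℝ)| ≤ Real.cos (7 * π / 16) := by
      rw [hp, inner_smul_left]
      simp only [RCLike.ofReal_real_eq_id, id, conj_trivial]
      rw [abs_mul, abs_inv, abs_of_pos hvn]
      rw [inv_mul_le_iff₀ hvn]
      linarith [hvxi]
    have hxiu1 : |(inner ℝ ξj u : ℝ)| ≤ 1 := by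
      have := abs_real_inner_le_norm ξj u
      rwa [hξj, hu, one_mul] at this
    have hnum : |(inner ℝ p ξj : ℝ)| * |(inner ℝ ξj u : ℝ)| +
        Real.sqrt (1 - (inner ℝ p ξj : ℝ)^2) * Real.sqrt (1 - (inner ℝ ξj u : ℝ)^2) ≤ K := by
      have h1 : Real.sqrt (1 - (inner ℝ p ξj : ℝ)^2) = Real.sqrt (1 - |(inner ℝ p ξj : ℝ)|^2) := by
        rw [sq_abs]
      have h2 : Real.sqrt (1 - (inner ℝ ξj u : ℝ)^2) = Real.sqrt (1 - |(inner ℝ ξj u : ℝ)|^2) := by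
        rw [sq_abs]
      rw [h1, h2, hK]
      exact numeric_bound (abs_nonneg _) hpxi hcosu hxiu1
    have hfin : |(inner ℝ p u : ℝ)| ≤ K := hpu.trans hnum
    have hpe : (inner ℝ p u : ℝ) = ‖v‖⁻¹ * (inner ℝ v u : ℝ) := by
      rw [hp, inner_smul_left]; simp
    rw [hpe, abs_mul, abs_inv, abs_of_pos hvn, inv_mul_le_iff₀ hvn] at hfin
    calc |(inner ℝ v u : ℝ)| ≤ ‖v‖ * K := hfin
      _ = K * ‖v‖ := by ring
  have heu : |(inner ℝ e u : ℝ)| ≤ δ * ‖v‖ := by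
    have := abs_real_inner_le_norm e u
    rw [hu, mul_one] at this
    linarith
  -- part (ii)
  have hwi : (inner ℝ (‖v + e‖⁻¹ • (v + e)) u : ℝ) = ‖v + e‖⁻¹ * (inner ℝ (v + e) u : ℝ) := by
    rw [inner_smul_left]; simp
  rw [hwi, abs_mul, abs_inv, abs_of_pos hm0]
  have hve : |(inner ℝ (v + e) u : ℝ)| ≤ (K + δ) * ‖v‖ := by
    rw [inner_add_left]
    calc |(inner ℝ v u : ℝ) + (inner ℝ e u : ℝ)| ≤ |(inner ℝ v u : ℝ)| + |(inner ℝ e u : ℝ)| :=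
        abs_add_le _ _
      _ ≤ K * ‖v‖ + δ * ‖v‖ := add_le_add hvu heu
      _ = (K + δ) * ‖v‖ := by ring
  have hKδ0 : 0 ≤ K + δ := by linarith
  have h1δ : (0:ℝ) < 1 - δ := by linarith
  calc ‖v + e‖⁻¹ * |(inner ℝ (v + e) u : ℝ)| ≤ ‖v + e‖⁻¹ * ((K + δ) * ‖v‖) :=
      mul_le_mul_of_nonneg_left hve (by positivity)
    _ ≤ ((1 - δ) * ‖v‖)⁻¹ * ((K + δ) * ‖v‖) := by
        apply mul_le_mul_of_nonneg_right _ (by positivity)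
        exact inv_anti₀ (by positivity) hi
    _ = (K + δ) / (1 - δ) := by field_simp
    _ = 1 - δ' := by rw [hδ']; ring
end
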